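/- Let M be a 2 × 2 integer matrix of the form M = [[a, b], [-c, -d]] with a, b, c, d positive integers and det(M) = -ad + bc ≠ 0 (M mixed and invertible over ℚ). Then the number of bounded (finite) M-subgraphs of ℕ² is min(ad, bc). -/

import Mathlib

/-- Adjacency in the graph `Γ(M)` on `ℕ²` for `M = [[a,b],[-c,-d]]`:
`u` and `v` are adjacent if `u - v` or `v - u` equals `(a,-c)` or `(b,-d)`. -/
def edge2 (a b c d : ℕ) (u v : ℕ × ℕ) : Prop :=
  (u.1 = v.1 + a ∧ v.2 = u.2 + c) ∨ (v.1 = u.1 + a ∧ u.2 = v.2 + c) ∨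
  (u.1 = v.1 + b ∧ v.2 = u.2 + d) ∨ (v.1 = u.1 + b ∧ u.2 = v.2 + d)

/-- The `M`-subgraph (connected component of `Γ(M)`) containing `u`. -/
def Mcomp (a b c d : ℕ) (u : ℕ × ℕ) : Set (ℕ × ℕ) :=
  {v | Relation.ReflTransGen (edge2 a b c d) u v}

namespace McompAux

variable {a b c d : ℕ}

lemma edge2_symm : Symmetric (edge2 a b c d) := by
  intro u v h
  unfold edge2 at *
  tauto

lemma R_symm {u v : ℕ × ℕ} (h : Relation.ReflTransGen (edge2 a b c d) u v) :
    Relation.ReflTransGen (edge2 a b c d) v u :=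
  haveI : Std.Symm (edge2 a b c d) := ⟨edge2_symm⟩
  (Relation.ReflTransGen.stdSymm (r := edge2 a b c d)).symm _ _ h

lemma Mcomp_eq {u v : ℕ × ℕ} (h : Relation.ReflTransGen (edge2 a b c d) u v) :
    Mcomp a b c d u = Mcomp a b c d v := by
  ext w
  constructor
  · intro hw; exact Relation.ReflTransGen.trans (R_symm h) hw
  · intro hw; exact Relation.ReflTransGen.trans h hw

/-- The key invariant along reachability from a "corner" point `p` with
`p.1 < a`, `p.2 < d` (assuming `a*d < b*c`). -/
lemma invariant (hb : 0 < b) (hd : 0 < d) (H : a * d < b * c)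
    {p v : ℕ × ℕ} (hp1 : p.1 < a) (hp2 : p.2 < d)
    (hv : Relation.ReflTransGen (edge2 a b c d) p v) :
    ∃ k s : ℤ, k ≤ 0 ∧
      (d * v.1 + b * v.2 : ℤ) = (d * p.1 + b * p.2 : ℤ) + k * (b * c - a * d) ∧
      ((v.1 : ℤ) - p.1 + a * k = b * s) := by
  induction hv with
  | refl => exact ⟨0, 0, le_refl 0, by ring, by ring⟩
  | @tail x w hx hedge ih =>
    obtain ⟨k, s, hk, hE, hD⟩ := ih
    have hb' : (0:ℤ) < b := by exact_mod_cast hb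
    have hd' : (0:ℤ) < d := by exact_mod_cast hd
    have hp2' : (p.2 : ℤ) < d := by exact_mod_cast hp2
    have hp1' : (p.1 : ℤ) < a := by exact_mod_cast hp1
    rcases hedge with ⟨h1, h2⟩ | ⟨h1, h2⟩ | ⟨h1, h2⟩ | ⟨h1, h2⟩
    · -- up move: x.1 = w.1 + a, w.2 = x.2 + c
      have h1' : (x.1 : ℤ) = w.1 + a := by exact_mod_cast h1
      have h2' : (w.2 : ℤ) = x.2 + c := by exact_mod_cast h2
      refine ⟨k + 1, s, ?_, ?_, ?_⟩
      · -- need k ≤ -1, i.e. k ≠ 0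
        rcases lt_or_eq_of_le hk with h | h
        · omega
        · exfalso
          -- k = 0 : then x is on the top segment, so x.1 < a; but x.1 ≥ a.
          rw [h] at hE hD
          have hE0 : (d * x.1 + b * x.2 : ℤ) = (d * p.1 + b * p.2 : ℤ) := by
            linarith [hE]
          have hD0 : (x.1 : ℤ) - p.1 = b * s := by linarith [hD]
          have hkey : (b : ℤ) * (d * s + x.2 - p.2) = 0 := by
            linear_combination hE0 - d * hD0
          have hkey2 : (d : ℤ) * s + x.2 - p.2 = 0 := by
            rcases mul_eq_zero.mp hkey with h' | h'
            · exact absurd h' (by positivity)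
            · exact h'
          have hx2 : (0:ℤ) ≤ x.2 := by positivity
          have hxa : (a:ℤ) ≤ x.1 := by
            have hw1 : (0:ℤ) ≤ w.1 := by positivity
            linarith
          rcases le_or_gt s 0 with hs | hs
          · -- s ≤ 0 ⇒ x.1 ≤ p.1 < a
            have : (b:ℤ) * s ≤ 0 := mul_nonpos_of_nonneg_of_nonpos hb'.le hs
            linarith
          · -- s ≥ 1 ⇒ x.2 < 0
            have hs1 : (1:ℤ) ≤ s := hs
            have : (d:ℤ) ≤ d * s := le_mul_of_one_le_right hd'.le hs1
            linarith
      · linear_combination hE - d * h1' + b * h2'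
      · linear_combination hD - h1'
    · -- down move: w.1 = x.1 + a, x.2 = w.2 + c
      have h1' : (w.1 : ℤ) = x.1 + a := by exact_mod_cast h1
      have h2' : (x.2 : ℤ) = w.2 + c := by exact_mod_cast h2
      exact ⟨k - 1, s, by omega, by linear_combination hE + d * h1' - b * h2',
        by linear_combination hD + h1'⟩
    · -- left move: x.1 = w.1 + b, w.2 = x.2 + d
      have h1' : (x.1 : ℤ) = w.1 + b := by exact_mod_cast h1
      have h2' : (w.2 : ℤ) = x.2 + d := by exact_mod_cast h2
      exact ⟨k, s - 1, hk, by linear_combination hE - d * h1' + b * h2',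
        by linear_combination hD - h1'⟩
    · -- right move: w.1 = x.1 + b, x.2 = w.2 + d
      have h1' : (w.1 : ℤ) = x.1 + b := by exact_mod_cast h1
      have h2' : (x.2 : ℤ) = w.2 + d := by exact_mod_cast h2
      exact ⟨k, s + 1, hk, by linear_combination hE + d * h1' - b * h2',
        by linear_combination hD + h1'⟩

/-- Part A: the component of a corner point is finite. -/
lemma partA (hb : 0 < b) (hd : 0 < d) (H : a * d < b * c)
    {p : ℕ × ℕ} (hp1 : p.1 < a) (hp2 : p.2 < d) :
    (Mcomp a b c d p).Finite := by
  apply Set.Finite.subset ((Set.finite_Iic (d * p.1 + b * p.2)).prod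
    (Set.finite_Iic (d * p.1 + b * p.2)))
  intro v hv
  obtain ⟨k, s, hk, hE, -⟩ := invariant hb hd H hp1 hp2 hv
  have hΔ : (0:ℤ) ≤ (b * c - a * d : ℤ) := by
    have : (a * d : ℤ) < b * c := by exact_mod_cast H
    linarith
  have hkΔ : k * (b * c - a * d : ℤ) ≤ 0 := mul_nonpos_of_nonpos_of_nonneg hk hΔ
  have hfv : (d * v.1 + b * v.2 : ℤ) ≤ (d * p.1 + b * p.2 : ℤ) := by
    rw [hE]; linarith
  have hb' : (1:ℤ) ≤ b := by exact_mod_cast hb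
  have hd' : (1:ℤ) ≤ d := by exact_mod_cast hd
  have hv1 : (v.1 : ℤ) ≤ (d * p.1 + b * p.2 : ℤ) := by
    nlinarith [Int.ofNat_nonneg v.1, Int.ofNat_nonneg v.2]
  have hv2 : (v.2 : ℤ) ≤ (d * p.1 + b * p.2 : ℤ) := by
    nlinarith [Int.ofNat_nonneg v.1, Int.ofNat_nonneg v.2]
  exact ⟨by exact_mod_cast hv1, by exact_mod_cast hv2⟩

/-- Part B: two corner points in the same component coincide. -/
lemma partB (hb : 0 < b) (hd : 0 < d) (H : a * d < b * c)
    {p q : ℕ × ℕ} (hp1 : p.1 < a) (hp2 : p.2 < d) (hq1 : q.1 < a) (hq2 : q.2 < d)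
    (h : Relation.ReflTransGen (edge2 a b c d) p q) : p = q := by
  obtain ⟨k, s, hk, hE, hD⟩ := invariant hb hd H hp1 hp2 h
  obtain ⟨k', s', hk', hE', -⟩ := invariant hb hd H hq1 hq2 (R_symm h)
  have hΔ : (0:ℤ) < (b * c - a * d : ℤ) := by
    have : (a * d : ℤ) < b * c := by exact_mod_cast H
    linarith
  have hsum : (k + k') * (b * c - a * d : ℤ) = 0 := by linear_combination -hE - hE'
  have hkk' : k + k' = 0 := by
    rcases mul_eq_zero.mp hsum with h' | h'
    · exact h'
    · exact absurd h' (ne_of_gt hΔ)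
  have hk0 : k = 0 := by omega
  rw [hk0] at hE hD
  have hE0 : (d * q.1 + b * q.2 : ℤ) = (d * p.1 + b * p.2 : ℤ) := by linarith [hE]
  have hD0 : (q.1 : ℤ) - p.1 = b * s := by linarith [hD]
  have hb' : (0:ℤ) < b := by exact_mod_cast hb
  have hd' : (0:ℤ) < d := by exact_mod_cast hd
  have hkey : (b : ℤ) * (d * s + q.2 - p.2) = 0 := by linear_combination hE0 - d * hD0
  have hkey2 : (d : ℤ) * s + q.2 - p.2 = 0 := by
    rcases mul_eq_zero.mp hkey with h' | h'
    · exact absurd h' (by positivity)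
    · exact h'
  have hp2' : (p.2 : ℤ) < d := by exact_mod_cast hp2
  have hq2' : (q.2 : ℤ) < d := by exact_mod_cast hq2
  have hp2n : (0:ℤ) ≤ p.2 := by positivity
  have hq2n : (0:ℤ) ≤ q.2 := by positivity
  have hs0 : s = 0 := by
    rcases lt_trichotomy s 0 with hs | hs | hs
    · have hs1 : s ≤ -1 := by omega
      have : (d:ℤ) * s ≤ d * (-1) := by
        exact mul_le_mul_of_nonneg_left hs1 hd'.le
      exfalso; linarith
    · exact hs
    · have hs1 : (1:ℤ) ≤ s := hs
      have : (d:ℤ) ≤ d * s := le_mul_of_one_le_right hd'.le hs1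
      exfalso; linarith
  rw [hs0] at hD0 hkey2
  have h1 : (q.1 : ℤ) = p.1 := by linarith
  have h2 : (q.2 : ℤ) = p.2 := by linarith
  have h1' : q.1 = p.1 := by exact_mod_cast h1
  have h2' : q.2 = p.2 := by exact_mod_cast h2
  exact Prod.ext h1'.symm h2'.symm

/-- Rightward normalization along `(b,-d)` steps, preserving `d*x + b*y`. -/
lemma rstep (hd : 0 < d) : ∀ y x : ℕ, ∃ w : ℕ × ℕ,
    Relation.ReflTransGen (edge2 a b c d) (x, y) w ∧ w.2 < d ∧
    d * w.1 + b * w.2 = d * x + b * y := by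
  intro y
  induction y using Nat.strong_induction_on with
  | _ y ih =>
    intro x
    by_cases hy : y < d
    · exact ⟨(x, y), Relation.ReflTransGen.refl, hy, rfl⟩
    · push_neg at hy
      obtain ⟨w, hw, h2, h3⟩ := ih (y - d) (by omega) (x + b)
      refine ⟨w, Relation.ReflTransGen.head ?_ hw, h2, ?_⟩
      · exact Or.inr (Or.inr (Or.inr ⟨rfl, by omega⟩))
      · rw [h3]; zify [hy]; ring

/-- Part C: a finite component contains a corner point. -/
lemma partC (hc : 0 < c) (hd : 0 < d) (H : a * d < b * c) {u : ℕ × ℕ}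
    (hfin : (Mcomp a b c d u).Finite) :
    ∃ p : ℕ × ℕ, Relation.ReflTransGen (edge2 a b c d) u p ∧ p.1 < a ∧ p.2 < d := by
  have hne : (Mcomp a b c d u).Nonempty := ⟨u, Relation.ReflTransGen.refl⟩
  obtain ⟨v, hv, hmax⟩ := Set.exists_max_image (Mcomp a b c d u)
    (fun w => d * w.1 + b * w.2) hfin hne
  obtain ⟨w, hvw, hw2, hwf⟩ := rstep (a := a) (b := b) (c := c) hd v.2 v.1
  have hvw' : Relation.ReflTransGen (edge2 a b c d) v w := hvw
  have hw_mem : w ∈ Mcomp a b c d u := Relation.ReflTransGen.trans hv hvw'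
  refine ⟨w, hw_mem, ?_, hw2⟩
  by_contra hwa
  push_neg at hwa
  have hedge : edge2 a b c d w (w.1 - a, w.2 + c) :=
    Or.inl ⟨(Nat.sub_add_cancel hwa).symm, rfl⟩
  have hw'_mem : (w.1 - a, w.2 + c) ∈ Mcomp a b c d u :=
    Relation.ReflTransGen.tail hw_mem hedge
  have hle : d * (w.1 - a) + b * (w.2 + c) ≤ d * v.1 + b * v.2 := hmax _ hw'_mem
  zify [hwa] at hle
  have hfwZ : (d : ℤ) * w.1 + b * w.2 = d * v.1 + b * v.2 := by exact_mod_cast hwf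
  have hH : (a * d : ℤ) < b * c := by exact_mod_cast H
  nlinarith [hle, hfwZ, hH]

/-- The key counting lemma, under the normalization `a*d < b*c`. -/
lemma key (a b c d : ℕ) (ha : 0 < a) (hb : 0 < b) (hc : 0 < c) (hd : 0 < d)
    (H : a * d < b * c) :
    {Γ : Set (ℕ × ℕ) | (∃ u, Γ = Mcomp a b c d u) ∧ Γ.Finite}.ncard = a * d := by
  have hSeq : {Γ : Set (ℕ × ℕ) | (∃ u, Γ = Mcomp a b c d u) ∧ Γ.Finite} =
      (fun p : ℕ × ℕ => Mcomp a b c d p) '' {p : ℕ × ℕ | p.1 < a ∧ p.2 < d} := by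
    ext Γ
    constructor
    · rintro ⟨⟨u, rfl⟩, hfin⟩
      obtain ⟨p, hup, hp1, hp2⟩ := partC hc hd H hfin
      exact ⟨p, ⟨hp1, hp2⟩, (Mcomp_eq hup).symm⟩
    · rintro ⟨p, ⟨hp1, hp2⟩, rfl⟩
      exact ⟨⟨p, rfl⟩, partA hb hd H hp1 hp2⟩
  rw [hSeq, Set.ncard_image_of_injOn]
  · have hT : {p : ℕ × ℕ | p.1 < a ∧ p.2 < d} =
        ↑(Finset.range a ×ˢ Finset.range d) := by
      ext p
      simp [Finset.mem_product]
    rw [hT, Set.ncard_coe_finset, Finset.card_product]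
    simp
  · intro p hp q hq hpq
    have hpq' : Mcomp a b c d p = Mcomp a b c d q := hpq
    have hqp : q ∈ Mcomp a b c d p := by
      rw [hpq']; exact Relation.ReflTransGen.refl
    exact partB hb hd H hp.1 hp.2 hq.1 hq.2 hqp

lemma edge2_swap (a b c d : ℕ) : edge2 a b c d = edge2 b a d c := by
  funext u v
  unfold edge2
  apply propext
  tauto

end McompAux

/-- For a mixed invertible matrix `M = [[a,b],[-c,-d]]` with `a,b,c,d > 0` and
`ad ≠ bc`, the number of bounded `M`-subgraphs of `ℕ²` is `min(ad, bc)`. -/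
theorem card_bounded_M_subgraphs (a b c d : ℕ)
    (ha : 0 < a) (hb : 0 < b) (hc : 0 < c) (hd : 0 < d)
    (hdet : a * d ≠ b * c) :
    {Γ : Set (ℕ × ℕ) | (∃ u, Γ = Mcomp a b c d u) ∧ Γ.Finite}.ncard =
      min (a * d) (b * c) := by
  rcases lt_or_gt_of_ne hdet with H | H
  · rw [Nat.min_eq_left H.le]
    exact McompAux.key a b c d ha hb hc hd H
  · rw [Nat.min_eq_right H.le]
    have hM : Mcomp a b c d = Mcomp b a d c := by
      unfold Mcomp
      rw [McompAux.edge2_swap]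
    rw [hM]
    exact McompAux.key b a d c hb ha hd hc H
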